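/- Let A be an n×n real SPSD matrix with eigenvalues λ₁ ≥ … ≥ λₙ ≥ 0, let Q ∈ ℝ^{n×ℓ} have orthonormal columns, let 1 ≤ k ≤ ℓ, and let ε₁, …, ε_k ≥ 0. Suppose that λᵢ − εᵢ ≤ σᵢ(QᵀA) ≤ λᵢ for i = 1, …, k, where σᵢ(QᵀA) denotes the i-th largest singular value of QᵀA. Let Â := A^{1/2} P A^{1/2} be the Nyström approximation of A with respect to Q, where P is the orthogonal projection onto the column space of A^{1/2}Q, and let λ̂ᵢ denote the i-th largest eigenvalue of Â. Then λᵢ − εᵢ ≤ λ̂ᵢ ≤ λᵢ for i = 1, …, k. -/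

import Mathlib

open Matrix BigOperators

/-- `M = U * diagonal μ * Uᵀ` is a spectral (eigen)decomposition of the symmetric matrix `M`,
with orthogonal `U` and eigenvalues `μ` listed in nonincreasing order. -/
def IsSpectralDecomp {n : ℕ} (M U : Matrix (Fin n) (Fin n) ℝ) (μ : Fin n → ℝ) : Prop :=
  Uᵀ * U = 1 ∧ Antitone μ ∧ M = U * Matrix.diagonal μ * Uᵀ

/-- Truncation of a spectral decomposition to its `k` largest (first `k`) eigenvalues:
the best rank-`k` approximation `M_(k)` associated with the decomposition `(U, μ)`. -/
noncomputable def trunc {n : ℕ} (k : ℕ) (U : Matrix (Fin n) (Fin n) ℝ) (μ : Fin n → ℝ) :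
    Matrix (Fin n) (Fin n) ℝ :=
  U * Matrix.diagonal (fun i : Fin n => if (i : ℕ) < k then μ i else 0) * Uᵀ

/-- `f` is operator monotone on SPSD matrices: for all `m` and all `m × m` SPSD matrices
`B ⪰ C ⪰ 0`, one has `f(B) ⪰ f(C)`, where matrix functions are computed through (any)
spectral decomposition. -/
def OperatorMonotone (f : ℝ → ℝ) : Prop :=
  ∀ (m : ℕ) (B C U V : Matrix (Fin m) (Fin m) ℝ) (β γ : Fin m → ℝ),
    IsSpectralDecomp B U β → IsSpectralDecomp C V γ →
    B.PosSemidef → C.PosSemidef → (B - C).PosSemidef →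
    (U * Matrix.diagonal (f ∘ β) * Uᵀ - V * Matrix.diagonal (f ∘ γ) * Vᵀ).PosSemidef

/-- Squared Frobenius norm `‖M‖_F² = Σ_{i,j} M_{ij}²`. -/
noncomputable def frobSq {m l : ℕ} (M : Matrix (Fin m) (Fin l) ℝ) : ℝ :=
  ∑ i, ∑ j, (M i j) ^ 2

/-- Frobenius norm. -/
noncomputable def frobNorm {m l : ℕ} (M : Matrix (Fin m) (Fin l) ℝ) : ℝ :=
  Real.sqrt (frobSq M)

/-- The eigenvalues of a Hermitian matrix listed in nonincreasing order:
`eigsDesc hM i` is the `(i+1)`-st largest eigenvalue of `M`. -/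
noncomputable def eigsDesc {m : ℕ} {M : Matrix (Fin m) (Fin m) ℝ} (hM : M.IsHermitian) :
    Fin m → ℝ :=
  fun i => (hM.eigenvalues ∘ Tuple.sort hM.eigenvalues) i.rev

/-- The singular values of `M` in nonincreasing order: `svDesc M i` is the `(i+1)`-st largest
singular value of `M`, i.e. the square root of the `(i+1)`-st largest eigenvalue of `MᴴM`. -/
noncomputable def svDesc {m l : ℕ} (M : Matrix (Fin m) (Fin l) ℝ) : Fin l → ℝ :=
  fun i => Real.sqrt (eigsDesc (Matrix.isHermitian_conjTranspose_mul_self M) i)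

/-- Nuclear norm: the sum of the singular values. -/
noncomputable def nuclearNorm {m l : ℕ} (M : Matrix (Fin m) (Fin l) ℝ) : ℝ :=
  ∑ i, svDesc M i

/-- Operator (spectral) norm: the largest singular value. -/
noncomputable def opNorm {m l : ℕ} (M : Matrix (Fin m) (Fin l) ℝ) : ℝ :=
  ⨆ i, svDesc M i

/-- `p`-th power of the Schatten `p`-norm: `‖M‖_(p)^p = Σᵢ σᵢ(M)^p`. -/
noncomputable def schattenPow {m l : ℕ} (p : ℝ) (M : Matrix (Fin m) (Fin l) ℝ) : ℝ :=
  ∑ i, svDesc M i ^ p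

/-- Schatten `p`-norm: `‖M‖_(p) = (Σᵢ σᵢ(M)^p)^(1/p)`. -/
noncomputable def schattenNorm {m l : ℕ} (p : ℝ) (M : Matrix (Fin m) (Fin l) ℝ) : ℝ :=
  (schattenPow p M) ^ (1 / p)

/-- `P` is the orthogonal projection onto the column space of `M`. -/
def IsOrthProjOnto {m l : ℕ} (P : Matrix (Fin m) (Fin m) ℝ) (M : Matrix (Fin m) (Fin l) ℝ) :
    Prop :=
  Pᵀ = P ∧ P * P = P ∧ P * M = M ∧ ∃ Y : Matrix (Fin l) (Fin m) ℝ, P = M * Y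

/-- The square root of a positive semidefinite matrix, as `Matrix.PosSemidef.sqrt` was defined
in Mathlib of December 2024 (removed since). -/
noncomputable def Matrix.PosSemidef.sqrt {ι : Type*} [Fintype ι] [DecidableEq ι]
    {A : Matrix ι ι ℝ} (hA : A.PosSemidef) : Matrix ι ι ℝ :=
  hA.1.eigenvectorUnitary.1 * diagonal ((↑) ∘ (Real.sqrt ∘ hA.1.eigenvalues)) *
    (star hA.1.eigenvectorUnitary : Matrix ι ι ℝ)

section Aux

open Matrix

lemma real_conjT {a b : ℕ} (M : Matrix (Fin a) (Fin b) ℝ) : Mᴴ = Mᵀ := by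
  ext i j; simp [conjTranspose_apply]

lemma dot_self_nonneg' {m : ℕ} (v : Fin m → ℝ) : 0 ≤ v ⬝ᵥ v :=
  Finset.sum_nonneg fun i _ => mul_self_nonneg _

lemma dot_mulVec_left {a b : ℕ} (B : Matrix (Fin a) (Fin b) ℝ) (x : Fin a → ℝ) (y : Fin b → ℝ) :
    x ⬝ᵥ B *ᵥ y = (Bᵀ *ᵥ x) ⬝ᵥ y := by
  rw [dotProduct_mulVec, mulVec_transpose]

lemma dot_isometry {a b : ℕ} {V : Matrix (Fin a) (Fin b) ℝ} (hV : V * Vᵀ = 1) (x : Fin a → ℝ) :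
    (Vᵀ *ᵥ x) ⬝ᵥ (Vᵀ *ᵥ x) = x ⬝ᵥ x := by
  rw [dot_mulVec_left, transpose_transpose, mulVec_mulVec, hV, one_mulVec]

end Aux

section QC

open Matrix

/-- The key comparison lemma (Courant–Fischer style). -/
lemma quadform_compare {n : ℕ} {M N V W : Matrix (Fin n) (Fin n) ℝ} {γ ν : Fin n → ℝ}
    (hM : IsSpectralDecomp M V γ) (hN : IsSpectralDecomp N W ν)
    (h : ∀ x : Fin n → ℝ, x ⬝ᵥ M *ᵥ x ≤ x ⬝ᵥ N *ᵥ x) (i : Fin n) : γ i ≤ ν i := by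
  obtain ⟨hV, hγ, hMe⟩ := hM
  obtain ⟨hW, hν, hNe⟩ := hN
  have hV' : V * Vᵀ = 1 := mul_eq_one_comm.mp hV
  have hW' : W * Wᵀ = 1 := mul_eq_one_comm.mp hW
  -- the constraint map
  let L : (Fin n → ℝ) →ₗ[ℝ] (Fin n → ℝ) :=
    { toFun := fun x j => if (j : ℕ) < (i : ℕ) then (Wᵀ *ᵥ x) j
        else if (i : ℕ) < (j : ℕ) then (Vᵀ *ᵥ x) j else 0
      map_add' := by
        intro x y; funext j; simp only [mulVec_add, Pi.add_apply]
        split_ifs <;> simp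
      map_smul' := by
        intro c x; funext j
        simp only [mulVec_smul, Pi.smul_apply, RingHom.id_apply, smul_eq_mul]
        split_ifs <;> simp }
  have hLi : ∀ x, L x i = 0 := by
    intro x; simp [L]
  have hker : LinearMap.ker L ≠ ⊥ := by
    intro hbot
    have hinj : Function.Injective L := LinearMap.ker_eq_bot.mp hbot
    have hrange : LinearMap.range L ≤ LinearMap.ker (LinearMap.proj i :
        (Fin n → ℝ) →ₗ[ℝ] ℝ) := by
      rintro y ⟨x, rfl⟩
      simpa [LinearMap.mem_ker] using hLi x
    have hproj : Function.Surjective (LinearMap.proj i :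
        (Fin n → ℝ) →ₗ[ℝ] ℝ) := fun c => ⟨fun _ => c, rfl⟩
    have h1 : Module.finrank ℝ (LinearMap.range (LinearMap.proj i :
        (Fin n → ℝ) →ₗ[ℝ] ℝ)) = 1 := by
      rw [LinearMap.range_eq_top.mpr hproj]
      simp
    have h2 := LinearMap.finrank_range_add_finrank_ker (LinearMap.proj i :
        (Fin n → ℝ) →ₗ[ℝ] ℝ)
    have h3 := LinearMap.finrank_range_add_finrank_ker L
    rw [LinearMap.ker_eq_bot.mpr hinj] at h3
    have h4 : Module.finrank ℝ (LinearMap.range L) ≤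
        Module.finrank ℝ (LinearMap.ker (LinearMap.proj i : (Fin n → ℝ) →ₗ[ℝ] ℝ)) :=
      Submodule.finrank_mono hrange
    have h5 : Module.finrank ℝ (Fin n → ℝ) = n := by simp
    rw [h1, h5] at h2
    rw [h5] at h3
    simp at h3
    omega
  obtain ⟨x, hxmem, hx0⟩ := Submodule.exists_mem_ne_zero_of_ne_bot hker
  have hxL : L x = 0 := LinearMap.mem_ker.mp hxmem
  set a : Fin n → ℝ := Vᵀ *ᵥ x with ha
  set b : Fin n → ℝ := Wᵀ *ᵥ x with hb
  have hbj : ∀ j : Fin n, (j : ℕ) < (i : ℕ) → b j = 0 := by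
    intro j hj
    have h0 := congrFun hxL j
    simp only [L, LinearMap.coe_mk, AddHom.coe_mk, Pi.zero_apply] at h0
    rw [if_pos hj] at h0
    rw [hb]; exact h0
  have haj : ∀ j : Fin n, (i : ℕ) < (j : ℕ) → a j = 0 := by
    intro j hj
    have h0 := congrFun hxL j
    simp only [L, LinearMap.coe_mk, AddHom.coe_mk, Pi.zero_apply] at h0
    rw [if_neg (by omega), if_pos hj] at h0
    rw [ha]; exact h0
  -- quadratic forms
  have hquadM : x ⬝ᵥ M *ᵥ x = ∑ j, γ j * a j ^ 2 := by
    rw [hMe, mul_assoc, ← mulVec_mulVec, dot_mulVec_left, ← mulVec_mulVec]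
    simp [dotProduct, mulVec_diagonal, ha]
    exact Finset.sum_congr rfl fun j _ => by ring
  have hquadN : x ⬝ᵥ N *ᵥ x = ∑ j, ν j * b j ^ 2 := by
    rw [hNe, mul_assoc, ← mulVec_mulVec, dot_mulVec_left, ← mulVec_mulVec]
    simp [dotProduct, mulVec_diagonal, hb]
    exact Finset.sum_congr rfl fun j _ => by ring
  have hxx : (0 : ℝ) < x ⬝ᵥ x := by
    have hex : ∃ j, x j ≠ 0 := Function.ne_iff.mp hx0
    obtain ⟨j, hj⟩ := hex
    exact Finset.sum_pos' (fun m _ => mul_self_nonneg _)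
      ⟨j, Finset.mem_univ j, mul_self_pos.mpr hj⟩
  have haa : a ⬝ᵥ a = x ⬝ᵥ x := dot_isometry hV' x
  have hbb : b ⬝ᵥ b = x ⬝ᵥ x := dot_isometry hW' x
  have key1 : γ i * (x ⬝ᵥ x) ≤ x ⬝ᵥ M *ᵥ x := by
    rw [hquadM, ← haa]
    have : γ i * (a ⬝ᵥ a) = ∑ j, γ i * a j ^ 2 := by
      show _ * (∑ j, _) = _
      rw [Finset.mul_sum]
      exact Finset.sum_congr rfl fun j _ => by ring
    rw [this]
    refine Finset.sum_le_sum fun j _ => ?_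
    rcases eq_or_ne (a j) 0 with hz | hz
    · simp [hz]
    · have hji : j ≤ i := by
        by_contra hc
        exact hz (haj j (lt_of_not_ge hc))
      exact mul_le_mul_of_nonneg_right (hγ hji) (sq_nonneg _)
  have key2 : x ⬝ᵥ N *ᵥ x ≤ ν i * (x ⬝ᵥ x) := by
    rw [hquadN, ← hbb]
    have : ν i * (b ⬝ᵥ b) = ∑ j, ν i * b j ^ 2 := by
      show _ * (∑ j, _) = _
      rw [Finset.mul_sum]
      exact Finset.sum_congr rfl fun j _ => by ring
    rw [this]
    refine Finset.sum_le_sum fun j _ => ?_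
    rcases eq_or_ne (b j) 0 with hz | hz
    · simp [hz]
    · have hij : i ≤ j := by
        by_contra hc
        exact hz (hbj j (lt_of_not_ge hc))
      exact mul_le_mul_of_nonneg_right (hν hij) (sq_nonneg _)
  have := (key1.trans (h x)).trans key2
  exact le_of_mul_le_mul_right this hxx

end QC

section SD
open Matrix

lemma sandwich_apply {n : ℕ} (V : Matrix (Fin n) (Fin n) ℝ) (d : Fin n → ℝ) (a b : Fin n) :
    (V * Matrix.diagonal d * Vᵀ) a b = ∑ j, V a j * d j * V b j := by
  rw [mul_apply]
  simp only [mul_diagonal, transpose_apply]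

lemma exists_spectral_eigsDesc {n : ℕ} {M : Matrix (Fin n) (Fin n) ℝ} (hM : M.IsHermitian) :
    ∃ V : Matrix (Fin n) (Fin n) ℝ, IsSpectralDecomp M V (eigsDesc hM) := by
  set V₀ : Matrix (Fin n) (Fin n) ℝ :=
    (Matrix.IsHermitian.eigenvectorUnitary hM : Matrix (Fin n) (Fin n) ℝ) with hV₀def
  have hmem := (Matrix.IsHermitian.eigenvectorUnitary hM).2
  have hV0 : V₀ᵀ * V₀ = 1 := by
    have := Matrix.mem_unitaryGroup_iff'.mp hmem
    rw [star_eq_conjTranspose, real_conjT] at this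
    exact this
  have hofReal : (RCLike.ofReal ∘ hM.eigenvalues : Fin n → ℝ) = hM.eigenvalues := by
    funext j; simp
  have hspec : M = V₀ * diagonal hM.eigenvalues * V₀ᵀ := by
    have h := hM.spectral_theorem
    rw [Unitary.conjStarAlgAut_apply, star_eq_conjTranspose, real_conjT, hofReal] at h
    exact h
  set e : Fin n ≃ Fin n := Fin.revPerm.trans (Tuple.sort hM.eigenvalues) with he
  have heapp : ∀ i : Fin n, e i = Tuple.sort hM.eigenvalues i.rev := fun i => rfl
  have heig : eigsDesc hM = fun i => hM.eigenvalues (e i) := rfl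
  refine ⟨V₀.submatrix id e, ?_, ?_, ?_⟩
  · ext a b
    have h1 : ((V₀.submatrix id e)ᵀ * V₀.submatrix id e) a b = (V₀ᵀ * V₀) (e a) (e b) := by
      simp [mul_apply, submatrix_apply]
    rw [h1, hV0]
    by_cases hab : a = b
    · subst hab; simp
    · rw [one_apply_ne (fun hc => hab (e.injective hc)), one_apply_ne hab]
  · rw [heig]
    intro a b hab
    have hm := Tuple.monotone_sort hM.eigenvalues
    exact hm (Fin.rev_le_rev.mpr hab)
  · rw [heig]
    conv_lhs => rw [hspec]
    ext a b
    rw [sandwich_apply, sandwich_apply]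
    exact (Fintype.sum_equiv e (fun j => (V₀.submatrix id e) a j *
      hM.eigenvalues (e j) * (V₀.submatrix id e) b j)
      (fun j => V₀ a j * hM.eigenvalues j * V₀ b j) (fun j => rfl)).symm

end SD

section MoreAux
open Matrix

lemma proj_quad {n : ℕ} {P : Matrix (Fin n) (Fin n) ℝ} (hPt : Pᵀ = P) (hPP : P * P = P)
    (w : Fin n → ℝ) : 0 ≤ w ⬝ᵥ P *ᵥ w ∧ w ⬝ᵥ P *ᵥ w ≤ w ⬝ᵥ w := by
  have hPw : w ⬝ᵥ P *ᵥ w = (P *ᵥ w) ⬝ᵥ (P *ᵥ w) := by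
    conv_lhs => rw [← hPP]
    rw [← mulVec_mulVec, dot_mulVec_left, hPt]
  constructor
  · rw [hPw]; exact dot_self_nonneg' _
  · have h0 : 0 ≤ (w - P *ᵥ w) ⬝ᵥ (w - P *ᵥ w) := dot_self_nonneg' _
    have hexp : (w - P *ᵥ w) ⬝ᵥ (w - P *ᵥ w)
        = w ⬝ᵥ w - w ⬝ᵥ (P *ᵥ w) - ((P *ᵥ w) ⬝ᵥ w - (P *ᵥ w) ⬝ᵥ (P *ᵥ w)) := by
      rw [sub_dotProduct, dotProduct_sub, dotProduct_sub]
    have hcomm : (P *ᵥ w) ⬝ᵥ w = w ⬝ᵥ (P *ᵥ w) := dotProduct_comm _ _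
    linarith [h0, hexp.symm.le, hexp.le]

lemma contraction_quad {n l : ℕ} {Q : Matrix (Fin n) (Fin l) ℝ} (hQ : Qᵀ * Q = 1)
    (y : Fin n → ℝ) : (Qᵀ *ᵥ y) ⬝ᵥ (Qᵀ *ᵥ y) ≤ y ⬝ᵥ y := by
  have h0 : 0 ≤ (y - Q *ᵥ (Qᵀ *ᵥ y)) ⬝ᵥ (y - Q *ᵥ (Qᵀ *ᵥ y)) := dot_self_nonneg' _
  have h1 : (Q *ᵥ (Qᵀ *ᵥ y)) ⬝ᵥ (Q *ᵥ (Qᵀ *ᵥ y)) = (Qᵀ *ᵥ y) ⬝ᵥ (Qᵀ *ᵥ y) := by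
    rw [dot_mulVec_left, mulVec_mulVec, hQ, one_mulVec]
  have h2 : y ⬝ᵥ (Q *ᵥ (Qᵀ *ᵥ y)) = (Qᵀ *ᵥ y) ⬝ᵥ (Qᵀ *ᵥ y) := by
    rw [dot_mulVec_left]
  have h3 : (Q *ᵥ (Qᵀ *ᵥ y)) ⬝ᵥ y = (Qᵀ *ᵥ y) ⬝ᵥ (Qᵀ *ᵥ y) := by
    rw [dotProduct_comm]; exact h2
  have hexp : (y - Q *ᵥ (Qᵀ *ᵥ y)) ⬝ᵥ (y - Q *ᵥ (Qᵀ *ᵥ y))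
      = y ⬝ᵥ y - y ⬝ᵥ (Q *ᵥ (Qᵀ *ᵥ y))
        - ((Q *ᵥ (Qᵀ *ᵥ y)) ⬝ᵥ y - (Q *ᵥ (Qᵀ *ᵥ y)) ⬝ᵥ (Q *ᵥ (Qᵀ *ᵥ y))) := by
    rw [sub_dotProduct, dotProduct_sub, dotProduct_sub]
  linarith

lemma psd_sqrt_props {n : ℕ} {A : Matrix (Fin n) (Fin n) ℝ} (hA : A.PosSemidef) :
    hA.sqrt * hA.sqrt = A ∧ (hA.sqrt)ᵀ = hA.sqrt := by
  have hU := Matrix.mem_unitaryGroup_iff'.mp hA.1.eigenvectorUnitary.2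
  have hstar : (star (hA.1.eigenvectorUnitary : Matrix (Fin n) (Fin n) ℝ)) =
      (hA.1.eigenvectorUnitary : Matrix (Fin n) (Fin n) ℝ)ᵀ := by
    rw [star_eq_conjTranspose, real_conjT]
  set D : Matrix (Fin n) (Fin n) ℝ :=
    diagonal ((↑) ∘ (Real.sqrt ∘ hA.1.eigenvalues)) with hDdef
  have hD : D * D = diagonal (RCLike.ofReal ∘ hA.1.eigenvalues : Fin n → ℝ) := by
    rw [hDdef, diagonal_mul_diagonal]; congr 1; funext j
    simp [Real.mul_self_sqrt (hA.eigenvalues_nonneg j)]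
  constructor
  · unfold Matrix.PosSemidef.sqrt
    rw [← hDdef]
    conv_rhs => rw [hA.1.spectral_theorem, Unitary.conjStarAlgAut_apply]
    rw [← hD]
    calc _ = (hA.1.eigenvectorUnitary : Matrix (Fin n) (Fin n) ℝ) * D *
          (star (hA.1.eigenvectorUnitary : Matrix (Fin n) (Fin n) ℝ) *
            (hA.1.eigenvectorUnitary : Matrix (Fin n) (Fin n) ℝ)) * D *
          star (hA.1.eigenvectorUnitary : Matrix (Fin n) (Fin n) ℝ) := by
            simp only [Matrix.mul_assoc]
      _ = _ := by rw [hU, Matrix.mul_one]; simp only [Matrix.mul_assoc]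
  · unfold Matrix.PosSemidef.sqrt
    rw [← hDdef, hstar, transpose_mul, transpose_mul, transpose_transpose, hDdef,
      diagonal_transpose, Matrix.mul_assoc]

end MoreAux


/-- Eigenvalue guarantees transfer from `QᵀA` to the Nyström approximation:
if `λᵢ − εᵢ ≤ σᵢ(QᵀA) ≤ λᵢ` for `i = 1,…,k`, then the `i`-th largest eigenvalue `λ̂ᵢ` of the
Nyström approximation `Â = A^{1/2} P A^{1/2}` (with `P` the orthogonal projection onto the
column space of `A^{1/2}Q`) satisfies `λᵢ − εᵢ ≤ λ̂ᵢ ≤ λᵢ` for `i = 1,…,k`. -/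
theorem nystrom_eigenvalue_guarantee
    (n l k : ℕ) (hk : 1 ≤ k) (hkl : k ≤ l)
    (A U : Matrix (Fin n) (Fin n) ℝ) (μ : Fin n → ℝ)
    (hA : A.PosSemidef) (hdecA : IsSpectralDecomp A U μ)
    (Q : Matrix (Fin n) (Fin l) ℝ) (hQ : Qᵀ * Q = 1)
    (eps : Fin n → ℝ) (hepsnn : ∀ i : Fin n, (i : ℕ) < k → 0 ≤ eps i)
    (hsv : ∀ i : Fin n, (i : ℕ) < k →
      μ i - eps i ≤ svDesc (Qᵀ * A) i ∧ svDesc (Qᵀ * A) i ≤ μ i)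
    (P Ahat : Matrix (Fin n) (Fin n) ℝ)
    (hP : IsOrthProjOnto P (hA.sqrt * Q))
    (hAhat : Ahat = hA.sqrt * P * hA.sqrt) :
    ∀ (W : Matrix (Fin n) (Fin n) ℝ) (ν : Fin n → ℝ), IsSpectralDecomp Ahat W ν →
      ∀ i : Fin n, (i : ℕ) < k → μ i - eps i ≤ ν i ∧ ν i ≤ μ i := by
  intro W ν hdec i hik
  set S := hA.sqrt with hSdef
  have hS : S * S = A := (psd_sqrt_props hA).1
  have hSt : Sᵀ = S := (psd_sqrt_props hA).2
  obtain ⟨hPt, hPP, hPM, -⟩ := hP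
  have hAhatT : Ahatᵀ = Ahat := by
    rw [hAhat, transpose_mul, transpose_mul, hSt, hPt]
    simp only [mul_assoc]
  -- quadratic form identities
  have hquadHat : ∀ x : Fin n → ℝ, x ⬝ᵥ Ahat *ᵥ x = (S *ᵥ x) ⬝ᵥ P *ᵥ (S *ᵥ x) := by
    intro x
    rw [hAhat, mul_assoc, ← mulVec_mulVec, dot_mulVec_left, hSt, ← mulVec_mulVec]
  have hquadA : ∀ x : Fin n → ℝ, x ⬝ᵥ A *ᵥ x = (S *ᵥ x) ⬝ᵥ (S *ᵥ x) := by
    intro x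
    rw [← hS, ← mulVec_mulVec, dot_mulVec_left, hSt]
  -- upper bound
  have hub : ν i ≤ μ i := by
    refine quadform_compare hdec hdecA (fun x => ?_) i
    rw [hquadHat x, hquadA x]
    exact (proj_quad hPt hPP (S *ᵥ x)).2
  -- nonnegativity of ν
  have hdec0W : IsSpectralDecomp 0 W (fun _ => 0) := by
    refine ⟨hdec.1, antitone_const, ?_⟩
    have : Matrix.diagonal (fun _ : Fin n => (0 : ℝ)) = 0 := Matrix.diagonal_zero
    rw [this, mul_zero, zero_mul]
  have hν0 : ∀ j, 0 ≤ ν j := by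
    intro j
    have := quadform_compare hdec0W hdec (fun x => by
      calc x ⬝ᵥ (0 : Matrix (Fin n) (Fin n) ℝ) *ᵥ x = 0 := by
            rw [zero_mulVec, dotProduct_zero]
        _ ≤ x ⬝ᵥ Ahat *ᵥ x := by rw [hquadHat x]; exact (proj_quad hPt hPP (S *ᵥ x)).1) j
    simpa using this
  -- decomposition of Ahat²
  obtain ⟨hWo, hνa, hWe⟩ := id hdec
  have hdecSq : IsSpectralDecomp (Ahat * Ahat) W (fun j => ν j ^ 2) := by
    refine ⟨hWo, fun a b hab => pow_le_pow_left₀ (hν0 b) (hνa hab) 2, ?_⟩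
    have hD : Matrix.diagonal ν * Matrix.diagonal ν
        = Matrix.diagonal (fun j => ν j ^ 2) := by
      rw [diagonal_mul_diagonal]
      congr 1; funext j; ring
    have hgroup : W * Matrix.diagonal ν * Wᵀ * (W * Matrix.diagonal ν * Wᵀ)
        = W * Matrix.diagonal ν * (Wᵀ * W) * (Matrix.diagonal ν * Wᵀ) := by
      simp only [mul_assoc]
    rw [hWe, hgroup, hWo, mul_one, ← hD]
    simp only [mul_assoc]
  -- key identity Qᵀ Ahat = Qᵀ A
  have hQA : Qᵀ * Ahat = Qᵀ * A := by
    have h2 : Qᵀ * S * P = Qᵀ * S := by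
      have h3 : (Qᵀ * S * P)ᵀ = S * Q := by
        rw [transpose_mul, transpose_mul, hPt, hSt, transpose_transpose, hPM]
      calc Qᵀ * S * P = ((Qᵀ * S * P)ᵀ)ᵀ := (transpose_transpose _).symm
        _ = (S * Q)ᵀ := by rw [h3]
        _ = Qᵀ * S := by rw [transpose_mul, hSt]
    rw [hAhat, ← hS]
    calc Qᵀ * (S * P * S) = Qᵀ * S * P * S := by
          rw [← Matrix.mul_assoc, ← Matrix.mul_assoc]
      _ = (Qᵀ * S) * S := by rw [h2]
      _ = Qᵀ * (S * S) := by rw [Matrix.mul_assoc]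
  -- quadratic comparison for G vs Ahat²
  have hquadle : ∀ x : Fin n → ℝ,
      x ⬝ᵥ ((Qᵀ * A)ᴴ * (Qᵀ * A)) *ᵥ x ≤ x ⬝ᵥ (Ahat * Ahat) *ᵥ x := by
    intro x
    have hGquad : x ⬝ᵥ ((Qᵀ * A)ᴴ * (Qᵀ * A)) *ᵥ x
        = ((Qᵀ * A) *ᵥ x) ⬝ᵥ ((Qᵀ * A) *ᵥ x) := by
      rw [real_conjT, ← mulVec_mulVec, dot_mulVec_left, transpose_transpose]
    have hGhat : x ⬝ᵥ (Ahat * Ahat) *ᵥ x = (Ahat *ᵥ x) ⬝ᵥ (Ahat *ᵥ x) := by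
      rw [← mulVec_mulVec, dot_mulVec_left, hAhatT]
    have h4 : (Qᵀ * A) *ᵥ x = Qᵀ *ᵥ (Ahat *ᵥ x) := by
      rw [mulVec_mulVec, hQA]
    rw [hGquad, hGhat, h4]
    exact contraction_quad hQ (Ahat *ᵥ x)
  obtain ⟨V, hdecG⟩ :=
    exists_spectral_eigsDesc (Matrix.isHermitian_conjTranspose_mul_self (Qᵀ * A))
  have hsv_le : svDesc (Qᵀ * A) i ≤ ν i := by
    have h5 : eigsDesc (Matrix.isHermitian_conjTranspose_mul_self (Qᵀ * A)) i ≤ ν i ^ 2 :=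
      quadform_compare hdecG hdecSq hquadle i
    calc svDesc (Qᵀ * A) i
        = Real.sqrt (eigsDesc (Matrix.isHermitian_conjTranspose_mul_self (Qᵀ * A)) i) := rfl
      _ ≤ Real.sqrt (ν i ^ 2) := Real.sqrt_le_sqrt h5
      _ = ν i := by rw [Real.sqrt_sq (hν0 i)]
  exact ⟨(hsv i hik).1.trans hsv_le, hub⟩
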